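/- Let w : Fin n → ℝ satisfy w i > 0 for all i and ∑ᵢ w i = 1, and let A be the perfectly consistent PRM defined by A i j = w i / w j. Then G.mulVec w equals the all-ones vector; consequently G⁻¹.mulVec 1 = w and ∑ᵢ ∑ⱼ (G⁻¹) i j = 1, so the Pseudo-Inverse-Gram-Matrix prioritization applied to A returns exactly w. -/

import Mathlib

open Matrix BigOperators

/-- A pairwise reciprocal matrix (PRM): all entries positive and `A i j * A j i = 1`. -/
def IsPRM {n : ℕ} (A : Matrix (Fin n) (Fin n) ℝ) : Prop :=
  ∀ i j, 0 < A i j ∧ A i j * A j i = 1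

/-- The matrix `Ḡ` with diagonal `(n-1) + ∑_{k ≠ i} (A k i)^2` and
off-diagonal `-(A i j + A j i)`. -/
noncomputable def Gbar {n : ℕ} (A : Matrix (Fin n) (Fin n) ℝ) :
    Matrix (Fin n) (Fin n) ℝ :=
  Matrix.of fun i j =>
    if i = j then ((n : ℝ) - 1) + ∑ k ∈ Finset.univ.filter (fun k => k ≠ i), (A k i) ^ 2
    else -(A i j + A j i)

/-- The all-ones matrix `J`. -/
noncomputable def Jmat (n : ℕ) : Matrix (Fin n) (Fin n) ℝ :=
  Matrix.of fun _ _ => 1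

/-- `G = Ḡ + J`. -/
noncomputable def Gmat {n : ℕ} (A : Matrix (Fin n) (Fin n) ℝ) :
    Matrix (Fin n) (Fin n) ℝ :=
  Gbar A + Jmat n

/-- The weighted least squares objective `f(w) = ∑ i ∑ j (w i - A i j * w j)^2`. -/
noncomputable def wls {n : ℕ} (A : Matrix (Fin n) (Fin n) ℝ) (w : Fin n → ℝ) : ℝ :=
  ∑ i, ∑ j, (w i - A i j * w j) ^ 2


section Aux
variable {n : ℕ}

lemma split_double {f g : Fin n → Fin n → ℝ} :
    ∑ i, ∑ j, (if i = j then f i j else g i j)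
      = (∑ i, f i i) + ∑ i, ∑ j, (if i = j then 0 else g i j) := by
  have h : ∀ i j : Fin n, (if i = j then f i j else g i j)
      = (if i = j then f i j else 0) + (if i = j then (0:ℝ) else g i j) := by
    intro i j; split <;> ring
  simp only [h, Finset.sum_add_distrib, Finset.sum_ite_eq, Finset.mem_univ, if_true]

lemma sum_ite_diag (i : Fin n) (c : ℝ) :
    ∑ j : Fin n, (if i = j then (0:ℝ) else c) = ((n:ℝ) - 1) * c := by
  have h : ∀ j : Fin n, (if i = j then (0:ℝ) else c) = c - (if i = j then c else 0) := by
    intro j; split <;> ring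
  simp only [h, Finset.sum_sub_distrib, Finset.sum_const, Finset.card_univ, Fintype.card_fin,
    Finset.sum_ite_eq, Finset.mem_univ, if_true, nsmul_eq_mul]
  ring

lemma swap_double (f : Fin n → Fin n → ℝ) :
    ∑ i, ∑ j, (if i = j then (0:ℝ) else f i j)
      = ∑ i, ∑ j, (if i = j then (0:ℝ) else f j i) := by
  rw [Finset.sum_comm]
  refine Finset.sum_congr rfl fun i _ => Finset.sum_congr rfl fun j _ => ?_
  by_cases h : i = j <;> simp [h, eq_comm]

lemma filter_ne_sum (i : Fin n) (f : Fin n → ℝ) :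
    ∑ k ∈ Finset.univ.filter (fun k => k ≠ i), f k
      = ∑ k, (if i = k then (0:ℝ) else f k) := by
  rw [Finset.sum_filter]
  refine Finset.sum_congr rfl fun k _ => ?_
  by_cases h : k = i
  · simp [h]
  · rw [if_pos h, if_neg (fun hh : i = k => h hh.symm)]

lemma split_single {f g : Fin n → Fin n → ℝ} (i : Fin n) :
    ∑ j, (if i = j then f i j else g i j) = f i i + ∑ j, (if i = j then (0:ℝ) else g i j) := by
  have h : ∀ j : Fin n, (if i = j then f i j else g i j)
      = (if i = j then f i j else 0) + (if i = j then (0:ℝ) else g i j) := by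
    intro j; split <;> ring
  have h2 : ∀ j : Fin n, (if i = j then f i j else 0) = (if i = j then f i i else 0) := by
    intro j; split
    · next hh => rw [hh]
    · rfl
  simp only [h, h2, Finset.sum_add_distrib, Finset.sum_ite_eq, Finset.mem_univ, if_true]

end Aux

section Quad
variable {n : ℕ}

private noncomputable def offs (f : Fin n → Fin n → ℝ) : ℝ :=
  ∑ i, ∑ j, (if i = j then (0:ℝ) else f i j)

private lemma offs_congr {f g : Fin n → Fin n → ℝ}
    (h : ∀ i j, i ≠ j → f i j = g i j) : offs f = offs g := by
  unfold offs
  refine Finset.sum_congr rfl fun i _ => Finset.sum_congr rfl fun j _ => ?_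
  by_cases hij : i = j
  · simp [hij]
  · simp [hij, h i j hij]

private lemma offs_add (f g : Fin n → Fin n → ℝ) :
    offs (fun i j => f i j + g i j) = offs f + offs g := by
  unfold offs
  rw [← Finset.sum_add_distrib]
  refine Finset.sum_congr rfl fun i _ => ?_
  rw [← Finset.sum_add_distrib]
  refine Finset.sum_congr rfl fun j _ => ?_
  split <;> ring

private lemma offs_swap (f : Fin n → Fin n → ℝ) :
    offs f = offs (fun i j => f j i) := swap_double f

lemma Gmat_quadform (A : Matrix (Fin n) (Fin n) ℝ) (x : Fin n → ℝ) :
    x ⬝ᵥ (Gmat A) *ᵥ x =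
      offs (fun i j => (x i - A i j * x j)^2) + (∑ i, x i)^2 := by
  have h1 : x ⬝ᵥ (Gmat A) *ᵥ x
      = (∑ i, ∑ j, x i * (Gbar A i j * x j)) + (∑ i, x i)^2 := by
    simp only [Gmat, Jmat, dotProduct, mulVec, Matrix.add_apply, Matrix.of_apply, add_mul,
      one_mul, mul_add, Finset.sum_add_distrib, Finset.mul_sum]
    rw [sq, Finset.sum_mul_sum]
  rw [h1]
  have h2 : ∑ i, ∑ j, x i * (Gbar A i j * x j)
      = (∑ i, x i * (((((n:ℝ)-1) + ∑ k ∈ Finset.univ.filter (fun k => k ≠ i), (A k i)^2)) * x i))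
        + offs (fun i j => x i * (-(A i j + A j i) * x j)) := by
    have : ∀ i j : Fin n, x i * (Gbar A i j * x j)
        = if i = j then x i * (((((n:ℝ)-1) + ∑ k ∈ Finset.univ.filter (fun k => k ≠ i), (A k i)^2)) * x j)
          else x i * (-(A i j + A j i) * x j) := by
      intro i j
      simp only [Gbar, of_apply]
      split <;> rfl
    simp only [this]
    have := split_double (n := n)
      (f := fun i j => x i * (((((n:ℝ)-1) + ∑ k ∈ Finset.univ.filter (fun k => k ≠ i), (A k i)^2)) * x j))
      (g := fun i j => x i * (-(A i j + A j i) * x j))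
    rw [this]; rfl
  rw [h2]
  -- expand the RHS square
  have h3 : offs (fun i j => (x i - A i j * x j)^2)
      = offs (fun i j => x i ^ 2) + offs (fun i j => -(A i j * x i * x j) + -(A i j * x i * x j))
        + offs (fun i j => (A i j)^2 * (x j)^2) := by
    rw [← offs_add, ← offs_add]
    refine offs_congr fun i j _ => by ring
  have h4 : offs (fun (i : Fin n) (j : Fin n) => x i ^ 2) = ∑ i, ((n:ℝ) - 1) * x i ^ 2 := by
    unfold offs
    exact Finset.sum_congr rfl fun i _ => sum_ite_diag i (x i ^ 2)
  have h5 : offs (fun i j => (A i j)^2 * (x j)^2)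
      = ∑ i, (∑ k ∈ Finset.univ.filter (fun k => k ≠ i), (A k i)^2) * x i ^ 2 := by
    rw [offs_swap]
    unfold offs
    refine Finset.sum_congr rfl fun i _ => ?_
    rw [Finset.sum_mul, filter_ne_sum i (fun k => (A k i)^2 * x i ^ 2)]
  have h6 : offs (fun i j => x i * (-(A i j + A j i) * x j))
      = offs (fun i j => -(A i j * x i * x j) + -(A i j * x i * x j)) := by
    have e1 : offs (fun i j => x i * (-(A i j + A j i) * x j))
        = offs (fun i j => -(A i j * x i * x j)) + offs (fun i j => -(A j i * x i * x j)) := by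
      rw [← offs_add]; refine offs_congr fun i j _ => by ring
    have e2 : offs (fun i j => -(A j i * x i * x j))
        = offs (fun i j => -(A i j * x i * x j)) := by
      rw [offs_swap (fun i j => -(A j i * x i * x j))]
      refine offs_congr fun i j _ => by ring
    rw [e1, e2, ← offs_add]
  rw [h3, h4, h5, h6]
  have h7 : ∑ i, x i * (((((n:ℝ)-1) + ∑ k ∈ Finset.univ.filter (fun k => k ≠ i), (A k i)^2)) * x i)
      = (∑ i, ((n:ℝ) - 1) * x i ^ 2)
        + ∑ i, (∑ k ∈ Finset.univ.filter (fun k => k ≠ i), (A k i)^2) * x i ^ 2 := by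
    rw [← Finset.sum_add_distrib]
    refine Finset.sum_congr rfl fun i _ => by ring
  rw [h7]; ring

end Quad


/-- if `A i j = w i / w j` for a positive weight vector `w` summing to 1,
then `G.mulVec w = 1`, `G⁻¹.mulVec 1 = w` and `∑ i ∑ j (G⁻¹) i j = 1`, so the
Pseudo-IGM prioritization applied to `A` returns exactly `w`. -/
theorem Gmat_mulVec_consistent {n : ℕ} (hn : 1 ≤ n)
    (A : Matrix (Fin n) (Fin n) ℝ) (w : Fin n → ℝ)
    (hw : ∀ i, 0 < w i) (hsum : ∑ i, w i = 1)
    (hA : ∀ i j, A i j = w i / w j) :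
    (Gmat A).mulVec w = 1 ∧
    (Gmat A)⁻¹.mulVec 1 = w ∧
    ∑ i, ∑ j, (Gmat A)⁻¹ i j = 1 := by
  have hwne : ∀ i, w i ≠ 0 := fun i => (hw i).ne'
  -- Part 1: G w = 1
  have h1 : (Gmat A).mulVec w = 1 := by
    funext i
    have hrow : (Gmat A *ᵥ w) i = (∑ j, Gbar A i j * w j) + ∑ j, w j := by
      simp [Gmat, Jmat, mulVec, dotProduct, Matrix.add_apply, add_mul,
        Finset.sum_add_distrib]
    have hbar : ∑ j, Gbar A i j * w j = 0 := by
      have hsplit : ∀ j, Gbar A i j * w j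
          = if i = j
            then (((n:ℝ)-1) + ∑ k ∈ Finset.univ.filter (fun k => k ≠ i), (A k i)^2) * w j
            else -(A i j + A j i) * w j := by
        intro j; simp only [Gbar, Matrix.of_apply]; split <;> rfl
      simp only [hsplit]
      rw [split_single (f := fun i j => (((n:ℝ)-1) + ∑ k ∈ Finset.univ.filter (fun k => k ≠ i), (A k i)^2) * w j)
        (g := fun i j => -(A i j + A j i) * w j) i]
      have hptw : ∀ j : Fin n, (if i = j then (0:ℝ) else -(A i j + A j i) * w j)
          = (if i = j then (0:ℝ) else -w i) + (if i = j then (0:ℝ) else -(w j ^ 2 / w i)) := by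
        intro j
        by_cases h : i = j
        · simp [h]
        · rw [if_neg h, if_neg h, if_neg h, hA, hA]
          have := hwne i; have := hwne j
          field_simp; ring
      simp only [hptw, Finset.sum_add_distrib, sum_ite_diag]
      have hneg : ∑ j : Fin n, (if i = j then (0:ℝ) else -(w j ^ 2 / w i))
          = -∑ j : Fin n, (if i = j then (0:ℝ) else w j ^ 2 / w i) := by
        rw [← Finset.sum_neg_distrib]
        refine Finset.sum_congr rfl fun j _ => by split <;> ring
      rw [hneg, ← filter_ne_sum i (fun k => w k ^ 2 / w i)]
      have hdiag : (((n:ℝ)-1) + ∑ k ∈ Finset.univ.filter (fun k => k ≠ i), (A k i)^2) * w i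
          = ((n:ℝ)-1) * w i + ∑ k ∈ Finset.univ.filter (fun k => k ≠ i), w k ^ 2 / w i := by
        rw [add_mul, Finset.sum_mul]
        congr 1
        refine Finset.sum_congr rfl fun k _ => ?_
        rw [hA]
        have := hwne i; have := hwne k
        field_simp
      rw [hdiag]; ring
    rw [hrow, hbar, hsum, Pi.one_apply, zero_add]
  -- Hermitian
  have hherm : (Gmat A).IsHermitian := by
    refine Matrix.IsHermitian.ext fun i j => ?_
    simp only [Gmat, Matrix.add_apply, Gbar, Jmat, Matrix.of_apply, star_trivial]
    by_cases h : i = j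
    · subst h; rfl
    · rw [if_neg h, if_neg (fun hh => h hh.symm)]
      ring
  -- Positive definiteness
  have hpos : (Gmat A).PosDef := by
    refine Matrix.PosDef.of_dotProduct_mulVec_pos hherm fun x hx => ?_
    have hsx : star x = x := funext fun i => star_trivial _
    rw [hsx, Gmat_quadform]
    have hoffnn : (0:ℝ) ≤ offs (fun i j => (x i - A i j * x j)^2) :=
      Finset.sum_nonneg fun i _ => Finset.sum_nonneg fun j _ => by
        split <;> positivity
    have hsqnn : (0:ℝ) ≤ (∑ i, x i)^2 := sq_nonneg _
    rcases lt_or_eq_of_le (add_nonneg hoffnn hsqnn) with hlt | heq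
    · exact hlt
    · exfalso
      have hzero := heq.symm
      have hboth := (add_eq_zero_iff_of_nonneg hoffnn hsqnn).mp hzero
      have hsumx : ∑ i, x i = 0 := by
        have := hboth.2
        exact pow_eq_zero_iff (by norm_num) |>.mp this
      have hterm : ∀ i j : Fin n, i ≠ j → x i = A i j * x j := by
        intro i j hij
        have h0 : (if i = j then (0:ℝ) else (x i - A i j * x j)^2) = 0 := by
          have := hboth.1
          unfold offs at this
          have hi := (Finset.sum_eq_zero_iff_of_nonneg
            (fun i _ => Finset.sum_nonneg fun j _ => by split <;> positivity)).mp
            this i (Finset.mem_univ i)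
          exact (Finset.sum_eq_zero_iff_of_nonneg
            (fun j _ => by split <;> positivity)).mp hi j (Finset.mem_univ j)
        rw [if_neg hij] at h0
        have := pow_eq_zero_iff (n := 2) (by norm_num) |>.mp h0
        linarith
      have hxz : x = 0 := by
        funext i
        have hrep : ∀ j : Fin n, x j = w j * (x i / w i) := by
          intro j
          by_cases h : j = i
          · subst h
            rw [mul_comm, div_mul_eq_mul_div, mul_div_assoc, div_self (hwne j), mul_one]
          · rw [hterm j i h, hA]
            field_simp
        have : ∑ j, x j = (∑ j, w j) * (x i / w i) := by
          rw [Finset.sum_mul]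
          exact Finset.sum_congr rfl fun j _ => hrep j
        rw [hsumx, hsum, one_mul] at this
        have hxi : x i / w i = 0 := this.symm
        have := (div_eq_zero_iff.mp hxi).resolve_right (hwne i)
        simpa using this
      exact hx hxz
  have hdet : IsUnit (Gmat A).det := hpos.det_pos.ne'.isUnit
  have h2 : (Gmat A)⁻¹.mulVec 1 = w := by
    rw [← h1, Matrix.mulVec_mulVec, Matrix.nonsing_inv_mul _ hdet, Matrix.one_mulVec]
  refine ⟨h1, h2, ?_⟩
  have hrowsum : ∀ i, ∑ j, (Gmat A)⁻¹ i j = ((Gmat A)⁻¹ *ᵥ (1 : Fin n → ℝ)) i := by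
    intro i; simp [mulVec, dotProduct]
  calc ∑ i, ∑ j, (Gmat A)⁻¹ i j = ∑ i, ((Gmat A)⁻¹ *ᵥ (1 : Fin n → ℝ)) i :=
        Finset.sum_congr rfl fun i _ => hrowsum i
    _ = ∑ i, w i := by rw [h2]
    _ = 1 := hsum
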